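/- Almost surely, sup_{t∈[0,1]} |W^n(t) − W̄(t)| → 0 as n → ∞, where W̄(t) := Γ(X̄)(t) = sup_{0≤s≤t} ((1/μ − 1)(t − s)) and 1/μ := E[ν_1]. (Functional strong law of large numbers for the workload of the transitory queue with uniformly scattered arrivals.) -/

import Mathlib

open MeasureTheory ProbabilityTheory Filter Set Real
open scoped ENNReal NNReal Classical

/-- The `j`-th order statistic of the values `f 0, …, f (n-1)`, i.e. the `j`-th smallest
value (with the convention that the `0`-th order statistic is `0`). -/
noncomputable def orderStat (n : ℕ) (f : Fin n → ℝ) (j : ℕ) : ℝ :=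
  sInf {x : ℝ | j ≤ (Finset.univ.filter fun i => f i ≤ x).card}

/-- The ordered statistics process `T^n(t) = T_(⌊nt⌋)` built from the first `n` variables
of the sequence `T`. -/
noncomputable def osProc {Ω : Type*} (T : ℕ → Ω → ℝ) (n : ℕ) (t : ℝ) (ω : Ω) : ℝ :=
  orderStat n (fun i => T i.1 ω) ⌊(n : ℝ) * t⌋₊

/-- The scaled service process `S^n(t) = (1/n) ∑_{i=1}^{⌊nt⌋} ν_i`
(job `j ≥ 1` has service time `ν (j-1)`). -/
noncomputable def sProc {Ω : Type*} (ν : ℕ → Ω → ℝ) (n : ℕ) (t : ℝ) (ω : Ω) : ℝ :=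
  (∑ i ∈ Finset.range ⌊(n : ℝ) * t⌋₊, ν i ω) / n

/-- The offered load process `X^n(t) = S^n(t) - T^n(t)`. -/
noncomputable def xProc {Ω : Type*} (T ν : ℕ → Ω → ℝ) (n : ℕ) (t : ℝ) (ω : Ω) : ℝ :=
  sProc ν n t ω - osProc T n t ω

/-- The Skorokhod reflection map `Γ(f)(t) = sup_{0 ≤ s ≤ t} (f t - f s)`. -/
noncomputable def skorokhod (f : ℝ → ℝ) (t : ℝ) : ℝ :=
  ⨆ s : Set.Icc (0 : ℝ) t, (f t - f s.1)


open Topology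

section Aux


lemma abs_ciSup_sub_ciSup_le {ι : Type*} [Nonempty ι] {u v : ι → ℝ} (hu : BddAbove (Set.range u))
    (hv : BddAbove (Set.range v)) {c : ℝ} (h : ∀ i, |u i - v i| ≤ c) :
    |(⨆ i, u i) - ⨆ i, v i| ≤ c := by
  rw [abs_sub_le_iff]
  constructor
  · rw [sub_le_iff_le_add]
    refine ciSup_le fun i => ?_
    have h1 := (abs_le.1 (h i)).2
    have h3 := le_ciSup hv i
    linarith
  · rw [sub_le_iff_le_add]
    refine ciSup_le fun i => ?_
    have h1 := (abs_le.1 (h i)).1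
    have h3 := le_ciSup hu i
    linarith

lemma unif_cesaro {A : ℕ → ℝ} {m : ℝ} (hA : Tendsto (fun k : ℕ => A k / k) atTop (𝓝 m))
    {ε : ℝ} (hε : 0 < ε) :
    ∀ᶠ n : ℕ in atTop, ∀ k ≤ n, |A k - m * k| ≤ ε * n := by
  have hb : ∀ᶠ k : ℕ in atTop, |A k - m * k| ≤ ε / 2 * k := by
    have h2 : ∀ᶠ k : ℕ in atTop, |A k / k - m| ≤ ε / 2 := by
      have := Metric.tendsto_atTop.1 hA (ε / 2) (by positivity)
      obtain ⟨N, hN⟩ := this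
      exact eventually_atTop.2 ⟨N, fun n hn => by
        have := hN n hn; rw [Real.dist_eq] at this; exact this.le⟩
    filter_upwards [h2, eventually_ge_atTop 1] with k hk hk1
    have hkpos : (0:ℝ) < k := by exact_mod_cast hk1
    have : |A k - m * k| = |A k / k - m| * k := by
      rw [show A k - m * k = (A k / k - m) * k by rw [sub_mul, div_mul_cancel₀ _ hkpos.ne'],
        abs_mul, abs_of_pos hkpos]
    rw [this]
    calc |A k / k - m| * k ≤ ε / 2 * k := by
          exact mul_le_mul_of_nonneg_right hk hkpos.le
      _ = ε / 2 * k := rfl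
  obtain ⟨K, hK⟩ := eventually_atTop.1 hb
  set B : ℝ := ∑ j ∈ Finset.range K, |A j - m * j| with hB
  have hBnn : 0 ≤ B := Finset.sum_nonneg fun j _ => abs_nonneg _
  have hBle : ∀ j < K, |A j - m * j| ≤ B :=
    fun j hj => Finset.single_le_sum (f := fun j : ℕ => |A j - m * (j:ℝ)|) (fun i _ => abs_nonneg _) (Finset.mem_range.2 hj)
  set N : ℕ := max K ⌈2 * B / ε⌉₊ with hN
  refine eventually_atTop.2 ⟨N, fun n hn k hk => ?_⟩
  have hnN : (N:ℝ) ≤ n := by exact_mod_cast hn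
  have hnB : B ≤ ε / 2 * n := by
    have h1 : (⌈2 * B / ε⌉₊ : ℝ) ≤ N := by exact_mod_cast le_max_right K ⌈2 * B / ε⌉₊
    have h2 : 2 * B / ε ≤ ⌈2 * B / ε⌉₊ := Nat.le_ceil _
    have : 2 * B / ε ≤ (n:ℝ) := by linarith
    rw [div_le_iff₀ hε] at this
    linarith
  by_cases hkK : K ≤ k
  · have := hK k hkK
    have hkn : (k:ℝ) ≤ n := by exact_mod_cast hk
    nlinarith [this]
  · push_neg at hkK
    have := hBle k hkK
    linarith

lemma sProc_unif {A : ℕ → ℝ} {m : ℝ} (hA : Tendsto (fun k : ℕ => A k / k) atTop (𝓝 m))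
    {ε : ℝ} (hε : 0 < ε) :
    ∀ᶠ n : ℕ in atTop, ∀ t ∈ Icc (0:ℝ) 1, |A ⌊(n:ℝ)*t⌋₊ / n - m * t| ≤ ε := by
  have h1 := unif_cesaro hA (show (0:ℝ) < ε/2 by positivity)
  have h2 : ∀ᶠ n : ℕ in atTop, (|m| + 1) / n ≤ ε / 2 := by
    have : Tendsto (fun n : ℕ => (|m| + 1) / n) atTop (𝓝 0) :=
      tendsto_const_nhds.div_atTop tendsto_natCast_atTop_atTop
    filter_upwards [Metric.tendsto_atTop.1 this (ε/2) (by positivity) |>.choose_spec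
      |> fun h => eventually_atTop.2 ⟨_, h⟩] with n hn
    rw [Real.dist_eq, sub_zero] at hn
    exact (le_abs_self _).trans hn.le
  filter_upwards [h1, h2, eventually_ge_atTop 1] with n hn hmn hn1
  intro t ht
  obtain ⟨ht0, ht1⟩ := ht
  have hnpos : (0:ℝ) < n := by exact_mod_cast hn1
  set j : ℕ := ⌊(n:ℝ)*t⌋₊ with hj
  have hjle : (j:ℝ) ≤ (n:ℝ)*t := Nat.floor_le (by positivity)
  have hjgt : (n:ℝ)*t < j + 1 := Nat.lt_floor_add_one _
  have hjn : j ≤ n := by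
    have : (j:ℝ) ≤ n := hjle.trans (by nlinarith)
    exact_mod_cast this
  have hb := hn j hjn
  have habs : |(j:ℝ)/n - t| ≤ 1/n := by
    have heq : (j:ℝ)/n - t = ((j:ℝ) - (n:ℝ)*t)/n := by field_simp
    have h' : |(j:ℝ) - (n:ℝ)*t| ≤ 1 := abs_le.2 ⟨by linarith, by linarith⟩
    rw [heq, abs_div, abs_of_pos hnpos]
    gcongr
  have key : |A j / n - m * t| ≤ |A j - m * j|/n + |m| * |(j:ℝ)/n - t| := by
    have : A j / n - m * t = (A j - m * j)/n + m * ((j:ℝ)/n - t) := by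
      field_simp
      ring
    rw [this]
    refine (abs_add_le _ _).trans ?_
    rw [abs_div, abs_of_pos hnpos, abs_mul]
  refine key.trans ?_
  have e1 : |A j - m * j|/n ≤ ε/2 := by
    rw [div_le_iff₀ hnpos]
    calc |A j - m * j| ≤ ε/2 * n := hb
    _ = ε/2 * n := rfl
  have e2 : |m| * |(j:ℝ)/n - t| ≤ ε/2 := by
    calc |m| * |(j:ℝ)/n - t| ≤ (|m| + 1) * (1/n) := by
          apply mul_le_mul (by linarith) habs (abs_nonneg _) (by positivity)
      _ = (|m| + 1)/n := by ring
      _ ≤ ε/2 := hmn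
  linarith
noncomputable def ecard (u : ℕ → ℝ) (n : ℕ) (x : ℝ) : ℕ :=
  (Finset.univ.filter fun i : Fin n => u i.1 ≤ x).card

lemma orderStat_eq (u : ℕ → ℝ) (n j : ℕ) :
    orderStat n (fun i => u i.1) j = sInf {x : ℝ | j ≤ ecard u n x} := rfl

lemma orderStat_unif {u : ℕ → ℝ} (hu : ∀ i, u i ∈ Icc (0:ℝ) 1)
    (hF : ∀ q : ℚ, 0 ≤ q → q ≤ 1 →
      Tendsto (fun n : ℕ => ((ecard u n (q:ℝ)) : ℝ) / n) atTop (𝓝 (q:ℝ)))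
    {ε : ℝ} (hε : 0 < ε) :
    ∀ᶠ n : ℕ in atTop, ∀ t ∈ Icc (0:ℝ) 1,
      |orderStat n (fun i => u i.1) ⌊(n:ℝ)*t⌋₊ - t| ≤ ε := by
  set δ := ε/3 with hδdef
  have hδ : 0 < δ := by positivity
  set K : ℕ := ⌈1/δ⌉₊ with hKdef
  have hK1 : 0 < K := Nat.ceil_pos.2 (by positivity)
  have hKpos : (0:ℝ) < K := by exact_mod_cast hK1
  have hKδ : 1/(K:ℝ) ≤ δ := by
    rw [div_le_iff₀ hKpos]
    have h1 := Nat.le_ceil (1/δ)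
    have : (1:ℝ)/δ ≤ K := by exact_mod_cast h1
    calc (1:ℝ) = δ * (1/δ) := by field_simp
      _ ≤ δ * K := by nlinarith
  have hgrid : ∀ᶠ n : ℕ in atTop, ∀ k ∈ Finset.range (K+1),
      |((ecard u n ((k:ℝ)/K)) : ℝ)/n - (k:ℝ)/K| ≤ δ := by
    rw [Filter.eventually_all_finset]
    intro k hk
    have hkK : k ≤ K := Nat.lt_succ_iff.1 (Finset.mem_range.1 hk)
    have h0 : (0:ℚ) ≤ (k:ℚ)/(K:ℚ) := by positivity
    have h1q : (k:ℚ)/(K:ℚ) ≤ 1 := by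
      rw [div_le_one (by exact_mod_cast hK1)]
      exact_mod_cast hkK
    have htd := hF ((k:ℚ)/K) h0 h1q
    have hcast : (((k:ℚ)/(K:ℚ) : ℚ):ℝ) = (k:ℝ)/K := by push_cast; ring
    rw [hcast] at htd
    obtain ⟨N, hN⟩ := Metric.tendsto_atTop.1 htd δ hδ
    refine eventually_atTop.2 ⟨N, fun n hn => ?_⟩
    have := hN n hn
    rw [Real.dist_eq] at this
    exact this.le
  have hne : ∀ᶠ n : ℕ in atTop, (1:ℝ)/n ≤ δ := by
    have : Tendsto (fun n : ℕ => (1:ℝ)/n) atTop (𝓝 0) :=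
      tendsto_const_nhds.div_atTop tendsto_natCast_atTop_atTop
    obtain ⟨N, hN⟩ := Metric.tendsto_atTop.1 this δ hδ
    refine eventually_atTop.2 ⟨N, fun n hn => ?_⟩
    have := hN n hn
    rw [Real.dist_eq, sub_zero] at this
    exact (le_abs_self _).trans this.le
  filter_upwards [hgrid, hne, eventually_ge_atTop 1] with n hg hn1δ hn1
  rintro t ⟨ht0, ht1⟩
  have hnpos : (0:ℝ) < n := by exact_mod_cast hn1
  set j : ℕ := ⌊(n:ℝ)*t⌋₊ with hjdef
  have hjle : (j:ℝ) ≤ (n:ℝ)*t := Nat.floor_le (by positivity)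
  have hjgt : (n:ℝ)*t < j + 1 := Nat.lt_floor_add_one _
  have hjnR : (j:ℝ) ≤ n := hjle.trans (by nlinarith)
  have hjn : j ≤ n := by exact_mod_cast hjnR
  have hjn1 : (j:ℝ)/n ≤ 1 := by rw [div_le_one hnpos]; exact hjnR
  rw [orderStat_eq]
  by_cases hj0 : j = 0
  · have hset : {x : ℝ | j ≤ ecard u n x} = univ := by
      ext x; simp [hj0]
    rw [hj0] at hset ⊢
    have hinf : sInf (univ : Set ℝ) = 0 := Real.sInf_of_not_bddBelow not_bddBelow_univ
    rw [hset, hinf]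
    have hlt : (n:ℝ)*t < 1 := by
      have := Nat.floor_eq_zero.1 hj0
      exact this
    have ht1n : t ≤ 1/n := by
      rw [le_div_iff₀ hnpos]; nlinarith
    rw [abs_sub_comm, sub_zero, abs_of_nonneg ht0]
    calc t ≤ 1/n := ht1n
      _ ≤ δ := hn1δ
      _ ≤ ε := by rw [hδdef]; linarith
  · have hj1 : 1 ≤ j := Nat.one_le_iff_ne_zero.2 hj0
    set S := {x : ℝ | j ≤ ecard u n x} with hSdef
    have hmono : ∀ x y : ℝ, x ≤ y → ecard u n x ≤ ecard u n y := fun x y hxy =>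
      Finset.card_le_card (Finset.monotone_filter_right _ fun i _ hi => hi.trans hxy)
    have hc1 : ecard u n 1 = n := by
      unfold ecard
      rw [Finset.filter_true_of_mem fun i _ => (hu i.1).2]
      simp
    have h1S : (1:ℝ) ∈ S := by
      simp only [hSdef, mem_setOf_eq, hc1]
      exact hjn
    have hS0 : ∀ x ∈ S, 0 ≤ x := by
      intro x hx
      have hpos : 0 < ecard u n x := lt_of_lt_of_le hj1 hx
      obtain ⟨i, hi⟩ := Finset.card_pos.1 hpos
      exact le_trans (hu i.1).1 (Finset.mem_filter.1 hi).2
    have hSbdd : BddBelow S := ⟨0, hS0⟩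
    have hlow : (j:ℝ)/n - 2*δ ≤ sInf S := by
      apply le_csInf ⟨1, h1S⟩
      intro x hx
      by_cases hx1 : 1 ≤ x
      · linarith
      · push_neg at hx1
        have hx0 : 0 ≤ x := hS0 x hx
        set k : ℕ := ⌈x*K⌉₊ with hkdef
        have hkK : k ≤ K := Nat.ceil_le.2 (by nlinarith)
        have hxk : x ≤ (k:ℝ)/K := by
          rw [le_div_iff₀ hKpos]; exact Nat.le_ceil _
        have hkx : (k:ℝ)/K ≤ x + 1/K := by
          have := Nat.ceil_lt_add_one (show (0:ℝ) ≤ x*K by positivity)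
          rw [div_le_iff₀ hKpos]
          have hexp : (x + 1/K)*K = x*K + 1 := by field_simp
          rw [hexp]
          exact this.le
        have hcx : j ≤ ecard u n ((k:ℝ)/K) := le_trans hx (hmono _ _ hxk)
        have hHk := hg k (Finset.mem_range.2 (Nat.lt_succ_of_le hkK))
        have h3 : ((ecard u n ((k:ℝ)/K)):ℝ)/n ≤ (k:ℝ)/K + δ := by
          have := (abs_le.1 hHk).2; linarith
        have hc' : (j:ℝ) ≤ ((ecard u n ((k:ℝ)/K)):ℝ) := by exact_mod_cast hcx
        have h4 : (j:ℝ)/n ≤ ((ecard u n ((k:ℝ)/K)):ℝ)/n := by gcongr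
        have h5 : (j:ℝ)/n ≤ x + 1/K + δ := by linarith
        linarith [hKδ]
    have hup : sInf S ≤ (j:ℝ)/n + 2*δ := by
      by_cases hcase : 1 ≤ (j:ℝ)/n + δ
      · exact (csInf_le hSbdd h1S).trans (by linarith)
      · push_neg at hcase
        have hjd0 : (0:ℝ) ≤ (j:ℝ)/n + δ := by positivity
        set k : ℕ := ⌈((j:ℝ)/n + δ)*K⌉₊ with hkdef
        have hkK : k ≤ K := Nat.ceil_le.2 (by nlinarith)
        have hge : (j:ℝ)/n + δ ≤ (k:ℝ)/K := by
          rw [le_div_iff₀ hKpos]; exact Nat.le_ceil _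
        have hle : (k:ℝ)/K ≤ (j:ℝ)/n + δ + 1/K := by
          have := Nat.ceil_lt_add_one (show (0:ℝ) ≤ ((j:ℝ)/n + δ)*K by positivity)
          rw [div_le_iff₀ hKpos]
          have hexp : ((j:ℝ)/n + δ + 1/K)*K = ((j:ℝ)/n + δ)*K + 1 := by field_simp <;> ring
          rw [hexp]
          exact this.le
        have hHk := hg k (Finset.mem_range.2 (Nat.lt_succ_of_le hkK))
        have h3 : (k:ℝ)/K - δ ≤ ((ecard u n ((k:ℝ)/K)):ℝ)/n := by
          have := (abs_le.1 hHk).1; linarith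
        have h4 : (j:ℝ)/n ≤ ((ecard u n ((k:ℝ)/K)):ℝ)/n := by linarith
        have h5R : (j:ℝ) ≤ ((ecard u n ((k:ℝ)/K)):ℝ) := by
          have h6 := mul_le_mul_of_nonneg_right h4 hnpos.le
          rw [div_mul_cancel₀ _ hnpos.ne', div_mul_cancel₀ _ hnpos.ne'] at h6
          exact h6
        have h5 : j ≤ ecard u n ((k:ℝ)/K) := by exact_mod_cast h5R
        have hmem : ((k:ℝ)/K) ∈ S := h5
        exact (csInf_le hSbdd hmem).trans (by linarith [hKδ])
    have hjt : |(j:ℝ)/n - t| ≤ 1/n := by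
      have heq : (j:ℝ)/n - t = ((j:ℝ) - (n:ℝ)*t)/n := by field_simp
      have h' : |(j:ℝ) - (n:ℝ)*t| ≤ 1 := abs_le.2 ⟨by linarith, by linarith⟩
      rw [heq, abs_div, abs_of_pos hnpos]
      gcongr
    have habs : |sInf S - (j:ℝ)/n| ≤ 2*δ := abs_le.2 ⟨by linarith, by linarith⟩
    calc |sInf S - t| ≤ |sInf S - (j:ℝ)/n| + |(j:ℝ)/n - t| := abs_sub_le _ _ _
      _ ≤ 2*δ + 1/n := add_le_add habs hjt
      _ ≤ 2*δ + δ := by linarith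
      _ = ε := by rw [hδdef]; ring

lemma T_mem_Icc {Ω : Type*} [MeasurableSpace Ω] (P : Measure Ω) [IsProbabilityMeasure P]
    (T : ℕ → Ω → ℝ) (hTmeas : ∀ i, Measurable (T i))
    (hTunif : ∀ i, Measure.map (T i) P = volume.restrict (Set.Icc (0:ℝ) 1)) :
    ∀ᵐ ω ∂P, ∀ i, T i ω ∈ Set.Icc (0:ℝ) 1 := by
  rw [ae_all_iff]
  intro i
  rw [ae_iff]
  have h : {ω | ¬ T i ω ∈ Set.Icc (0:ℝ) 1} = T i ⁻¹' (Set.Icc (0:ℝ) 1)ᶜ := rfl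
  rw [h, ← Measure.map_apply (hTmeas i) measurableSet_Icc.compl, hTunif i,
    Measure.restrict_apply measurableSet_Icc.compl]
  simp

lemma ecard_tendsto {Ω : Type*} [MeasurableSpace Ω] (P : Measure Ω) [IsProbabilityMeasure P]
    (T : ℕ → Ω → ℝ) (hTmeas : ∀ i, Measurable (T i))
    (hTindep : iIndepFun T P)
    (hTunif : ∀ i, Measure.map (T i) P = volume.restrict (Set.Icc (0 : ℝ) 1)) :
    ∀ᵐ ω ∂P, ∀ q : ℚ, 0 ≤ q → q ≤ 1 →
      Tendsto (fun n : ℕ => ((ecard (fun i => T i ω) n (q:ℝ)) : ℝ)/n) atTop (𝓝 (q:ℝ)) := by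
  rw [ae_all_iff]
  intro q
  by_cases hq : 0 ≤ q ∧ q ≤ 1
  case neg =>
    filter_upwards with ω h0 h1
    exact absurd ⟨h0, h1⟩ hq
  obtain ⟨hq0, hq1⟩ := hq
  set r : ℝ := (q:ℝ) with hr
  have hr0 : 0 ≤ r := by rw [hr]; exact_mod_cast hq0
  have hr1 : r ≤ 1 := by rw [hr]; exact_mod_cast hq1
  set g : ℝ → ℝ := fun x => if x ≤ r then 1 else 0 with hg
  have gmeas : Measurable g :=
    Measurable.ite (measurableSet_le measurable_id measurable_const)
      measurable_const measurable_const
  set Y : ℕ → Ω → ℝ := fun i => g ∘ T i with hY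
  have hYmeas : ∀ i, Measurable (Y i) := fun i => gmeas.comp (hTmeas i)
  have hint : Integrable (Y 0) P := by
    refine (integrable_const (1:ℝ)).mono' (hYmeas 0).aestronglyMeasurable ?_
    filter_upwards with ω
    simp only [hY, hg, Function.comp_apply, Real.norm_eq_abs]
    split <;> simp
  have hindep : Pairwise (Function.onFun (IndepFun · · P) Y) := fun i j hij =>
    (hTindep.comp (fun _ => g) (fun _ => gmeas)).indepFun hij
  have hident : ∀ i, IdentDistrib (Y i) (Y 0) P P := fun i =>
    (⟨(hTmeas i).aemeasurable, (hTmeas 0).aemeasurable, (hTunif i).trans (hTunif 0).symm⟩ :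
      IdentDistrib (T i) (T 0) P P).comp gmeas
  have hsl := strong_law_ae_real Y hint hindep hident
  have hmean : ∫ ω, Y 0 ω ∂P = r := by
    have h1 : ∫ ω, g (T 0 ω) ∂P = ∫ x, g x ∂(Measure.map (T 0) P) :=
      (integral_map (hTmeas 0).aemeasurable gmeas.aestronglyMeasurable).symm
    have h0 : ∫ ω, Y 0 ω ∂P = ∫ ω, g (T 0 ω) ∂P := rfl
    rw [h0, h1, hTunif 0]
    have hgind : g = (Set.Iic r).indicator (fun _ => (1:ℝ)) := by
      funext x
      simp [hg, Set.indicator, Set.mem_Iic]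
    rw [hgind, integral_indicator_const _ measurableSet_Iic,
      measureReal_restrict_apply measurableSet_Iic]
    have hset : Set.Iic r ∩ Set.Icc 0 1 = Set.Icc 0 r := by
      ext x
      simp only [mem_inter_iff, mem_Iic, mem_Icc]
      constructor
      · rintro ⟨h1, h2, h3⟩; exact ⟨h2, h1⟩
      · rintro ⟨h1, h2⟩; exact ⟨h2, h1, h2.trans hr1⟩
    rw [hset, Real.volume_real_Icc, sub_zero]
    simp [hr0]
  rw [hmean] at hsl
  filter_upwards [hsl] with ω hω _ _
  have hcard : ∀ n : ℕ, ((ecard (fun i => T i ω) n r : ℕ) : ℝ) =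
      ∑ i ∈ Finset.range n, Y i ω := by
    intro n
    unfold ecard
    rw [Finset.card_filter]
    push_cast
    rw [Fin.sum_univ_eq_sum_range (fun i => if T i ω ≤ r then (1:ℝ) else 0) n]
    rfl
  have : (fun n : ℕ => ((ecard (fun i => T i ω) n r : ℕ) : ℝ)/n) =
      fun n : ℕ => (∑ i ∈ Finset.range n, Y i ω)/n := by
    funext n; rw [hcard]
  rw [hr] at this ⊢
  rw [this]
  exact hω

end Aux
/-- **FSLLN for the workload of the transitory queue.**
If `T 0, T 1, …` are i.i.d. uniform on `[0,1]`, `ν 0, ν 1, …` are i.i.d. strictly positive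
with everywhere-finite moment generating function and mean `1/μ = E[ν 0]`, and the two
families are independent, then almost surely
`sup_{t∈[0,1]} |W^n(t) - W̄(t)| → 0`, where `W^n = Γ(X^n)` and
`W̄(t) = sup_{0≤s≤t} ((1/μ - 1)(t - s))`. -/
theorem workload_fslln
    {Ω : Type*} [MeasurableSpace Ω] (P : Measure Ω) [IsProbabilityMeasure P]
    (T ν : ℕ → Ω → ℝ)
    (hTmeas : ∀ i, Measurable (T i))
    (hTindep : iIndepFun T P)
    (hTunif : ∀ i, Measure.map (T i) P = volume.restrict (Set.Icc (0 : ℝ) 1))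
    (hνmeas : ∀ i, Measurable (ν i))
    (hνindep : iIndepFun ν P)
    (hνident : ∀ i, Measure.map (ν i) P = Measure.map (ν 0) P)
    (hνpos : ∀ i, ∀ᵐ ω ∂P, 0 < ν i ω)
    (hmgf : ∀ θ : ℝ, Integrable (fun ω => Real.exp (θ * ν 0 ω)) P)
    (hTν : IndepFun (fun ω (i : ℕ) => T i ω) (fun ω (i : ℕ) => ν i ω) P) :
    ∀ᵐ ω ∂P,
      Filter.Tendsto
        (fun n : ℕ =>
          ⨆ t : Set.Icc (0 : ℝ) 1,
            |skorokhod (fun s => xProc T ν n s ω) t.1 -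
              ⨆ s : Set.Icc (0 : ℝ) t.1, (((∫ x, ν 0 x ∂P) - 1) * (t.1 - s.1))|)
        Filter.atTop (nhds 0) := by
  set m : ℝ := ∫ x, ν 0 x ∂P with hm
  have hintν : Integrable (ν 0) P := by
    have h1 := hmgf 1
    have h2 := hmgf (-1)
    simp only [one_mul] at h1
    simp only [neg_one_mul] at h2
    refine (h1.add h2).mono' (hνmeas 0).aestronglyMeasurable ?_
    filter_upwards with ω
    simp only [Real.norm_eq_abs, Pi.add_apply]
    have e1 := Real.add_one_le_exp (ν 0 ω)
    have e2 := Real.add_one_le_exp (-(ν 0 ω))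
    have p1 := Real.exp_pos (ν 0 ω)
    have p2 := Real.exp_pos (-(ν 0 ω))
    rw [abs_le]
    constructor <;> nlinarith
  have hpairν : Pairwise (Function.onFun (IndepFun · · P) ν) := fun i j hij => hνindep.indepFun hij
  have hidν : ∀ i, IdentDistrib (ν i) (ν 0) P P := fun i =>
    ⟨(hνmeas i).aemeasurable, (hνmeas 0).aemeasurable, hνident i⟩
  have E1 := strong_law_ae_real ν hintν hpairν hidν
  have E2 := ecard_tendsto P T hTmeas hTindep hTunif
  have E3 := T_mem_Icc P T hTmeas hTunif
  filter_upwards [E1, E2, E3] with ω hSL hGC hT01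
  have key : ∀ γ : ℝ, 0 < γ → ∀ᶠ n : ℕ in atTop, ∀ t ∈ Icc (0:ℝ) 1,
      |xProc T ν n t ω - (m - 1) * t| ≤ γ := by
    intro γ hγ
    have hS := sProc_unif (A := fun k => ∑ i ∈ Finset.range k, ν i ω) hSL (half_pos hγ)
    have hO := orderStat_unif (u := fun i => T i ω) hT01 hGC (half_pos hγ)
    filter_upwards [hS, hO] with n hSn hOn t ht
    have h1 := hSn t ht
    have h2 := hOn t ht
    have hx : xProc T ν n t ω - (m - 1) * t =
        ((∑ i ∈ Finset.range ⌊(n:ℝ)*t⌋₊, ν i ω)/n - m * t)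
          - (orderStat n (fun i => T i.1 ω) ⌊(n:ℝ)*t⌋₊ - t) := by
      unfold xProc sProc osProc
      ring
    rw [hx]
    have h2' : |orderStat n (fun i => T i.1 ω) ⌊(n:ℝ)*t⌋₊ - t| ≤ γ/2 := h2
    calc |((∑ i ∈ Finset.range ⌊(n:ℝ)*t⌋₊, ν i ω)/n - m * t)
          - (orderStat n (fun i => T i.1 ω) ⌊(n:ℝ)*t⌋₊ - t)|
        ≤ |(∑ i ∈ Finset.range ⌊(n:ℝ)*t⌋₊, ν i ω)/n - m * t|
          + |orderStat n (fun i => T i.1 ω) ⌊(n:ℝ)*t⌋₊ - t| := abs_sub _ _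
      _ ≤ γ/2 + γ/2 := add_le_add h1 h2'
      _ = γ := by ring
  rw [Metric.tendsto_atTop]
  intro ε hε
  have hγ : 0 < ε/3 := by positivity
  obtain ⟨N, hN⟩ := eventually_atTop.1 (key (ε/3) hγ)
  refine ⟨N, fun n hn => ?_⟩
  have hkey := hN n hn
  have hti : ∀ t : Set.Icc (0:ℝ) 1,
      |skorokhod (fun s => xProc T ν n s ω) t.1 -
        ⨆ s : Set.Icc (0:ℝ) t.1, ((m - 1) * (t.1 - s.1))| ≤ 2*(ε/3) := by
    intro t
    have ht0 : (0:ℝ) ≤ t.1 := t.2.1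
    have ht1 : t.1 ≤ 1 := t.2.2
    haveI : Nonempty (Set.Icc (0:ℝ) t.1) := ⟨⟨0, le_refl 0, ht0⟩⟩
    set f : ℝ → ℝ := fun s => xProc T ν n s ω with hf
    have hsk : skorokhod f t.1 = ⨆ s : Set.Icc (0:ℝ) t.1, (f t.1 - f s.1) := rfl
    rw [hsk]
    have hmem : ∀ s : Set.Icc (0:ℝ) t.1, s.1 ∈ Icc (0:ℝ) 1 :=
      fun s => ⟨s.2.1, s.2.2.trans ht1⟩
    have hft : |f t.1 - (m-1)*t.1| ≤ ε/3 := hkey t.1 ⟨ht0, ht1⟩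
    have hfs : ∀ s : Set.Icc (0:ℝ) t.1, |f s.1 - (m-1)*s.1| ≤ ε/3 :=
      fun s => hkey s.1 (hmem s)
    apply abs_ciSup_sub_ciSup_le
    · refine ⟨|f t.1| + (|m-1| + ε/3), ?_⟩
      rintro x ⟨s, rfl⟩
      have h1 := (abs_le.1 (hfs s)).1
      have h2 : |(m-1) * s.1| ≤ |m-1| := by
        rw [abs_mul]
        have hs : |s.1| ≤ 1 := abs_le.2 ⟨by linarith [s.2.1], s.2.2.trans ht1⟩
        nlinarith [abs_nonneg (m-1)]
      have h3 := (abs_le.1 h2).1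
      have h4 := le_abs_self (f t.1)
      simp only []
      linarith
    · refine ⟨|m-1|, ?_⟩
      rintro x ⟨s, rfl⟩
      have hs0 : 0 ≤ t.1 - s.1 := by linarith [s.2.2]
      have hs1 : t.1 - s.1 ≤ 1 := by linarith [s.2.1]
      have habs : |t.1 - s.1| ≤ 1 := abs_le.2 ⟨by linarith, hs1⟩
      calc (m-1)*(t.1-s.1) ≤ |(m-1)*(t.1-s.1)| := le_abs_self _
        _ = |m-1| * |t.1-s.1| := abs_mul _ _
        _ ≤ |m-1| * 1 := by nlinarith [abs_nonneg (m-1), abs_nonneg (t.1 - s.1)]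
        _ = |m-1| := mul_one _
    · intro s
      have heq : (f t.1 - f s.1) - (m-1)*(t.1 - s.1)
          = (f t.1 - (m-1)*t.1) - (f s.1 - (m-1)*s.1) := by ring
      rw [heq]
      calc |(f t.1 - (m-1)*t.1) - (f s.1 - (m-1)*s.1)|
          ≤ |f t.1 - (m-1)*t.1| + |f s.1 - (m-1)*s.1| := abs_sub _ _
        _ ≤ ε/3 + ε/3 := add_le_add hft (hfs s)
        _ = 2*(ε/3) := by ring
  haveI : Nonempty (Set.Icc (0:ℝ) 1) := ⟨⟨0, le_refl 0, zero_le_one⟩⟩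
  have hsup := ciSup_le hti
  have hnn : (0:ℝ) ≤ ⨆ t : Set.Icc (0:ℝ) 1,
      |skorokhod (fun s => xProc T ν n s ω) t.1 -
        ⨆ s : Set.Icc (0:ℝ) t.1, ((m - 1) * (t.1 - s.1))| :=
    Real.iSup_nonneg fun t => abs_nonneg _
  rw [Real.dist_eq, sub_zero, abs_of_nonneg hnn]
  linarith
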